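/- Let d ≥ 1 and k ≥ 1, and let G = (V,D) be a graph with no isolated vertices whose edge set D is a k-fold R_d-circuit having at most two technicolour vertices. Then D is a balanced k-fold R_d-circuit. -/

import Mathlib

open scoped BigOperators

/-- The row of the `d`-dimensional rigidity matrix of a realisation `p : V → ℝ^d`
indexed by the (unordered) edge `e`. -/
noncomputable def rigRow (d : ℕ) {V : Type*} [DecidableEq V]
    (p : V → Fin d → ℝ) (e : Sym2 V) : V × Fin d → ℝ :=
  Sym2.lift
    ⟨fun u v wi =>
        (((if wi.1 = u then (1 : ℝ) else 0) - (if wi.1 = v then (1 : ℝ) else 0)) *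
          (p u wi.2 - p v wi.2)),
      fun u v => by funext wi; ring⟩ e

/-- A realisation is generic if the coordinates of the points form an algebraically
independent set over `ℚ`. -/
def Generic (d : ℕ) {V : Type*} (p : V → Fin d → ℝ) : Prop :=
  AlgebraicIndependent ℚ fun vi : V × Fin d => p vi.1 vi.2

/-- `rrk d p F` : the rank of the set of rows of the rigidity matrix of `(K_V, p)`
indexed by the edges in `F`.  For generic `p` this is the rank function `r_d` of
the generic `d`-dimensional rigidity matroid. -/
noncomputable def rrk (d : ℕ) {V : Type*} [Fintype V] [DecidableEq V]
    (p : V → Fin d → ℝ) (F : Set (Sym2 V)) : ℕ :=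
  Module.finrank ℝ (Submodule.span ℝ (rigRow d p '' F))

/-- `D` is a `k`-fold circuit (with respect to the realisation `p`) :
`r (D \ {f}) = r D` for every `f ∈ D`, and `r D = |D| - k`. -/
def IsKFoldCircuit (d : ℕ) {V : Type*} [Fintype V] [DecidableEq V]
    (p : V → Fin d → ℝ) (D : Finset (Sym2 V)) (k : ℕ) : Prop :=
  (∀ f ∈ D, rrk d p (↑D \ {f}) = rrk d p ↑D) ∧ rrk d p ↑D + k = D.card

/-- An `R_d`-circuit: `r C = |C| - 1` and `r (C \ {f}) = r C` for all `f ∈ C`. -/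
def IsCircuit (d : ℕ) {V : Type*} [Fintype V] [DecidableEq V]
    (p : V → Fin d → ℝ) (C : Finset (Sym2 V)) : Prop :=
  IsKFoldCircuit d p C 1

/-- `A` is a part of the principal partition of the `k`-fold circuit `D`:
the parts are the sets `D \ B` where `B` runs over the `(k-1)`-fold circuits
contained in `D`. -/
def IsPrincipalPart (d : ℕ) {V : Type*} [Fintype V] [DecidableEq V]
    (p : V → Fin d → ℝ) (D : Finset (Sym2 V)) (k : ℕ) (A : Finset (Sym2 V)) : Prop :=
  ∃ B ⊆ D, IsKFoldCircuit d p B (k - 1) ∧ A = D \ B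

/-- Closure in the rigidity matroid: all edges of `K_V` whose addition to `F`
does not increase the rank. -/
def rcl (d : ℕ) {V : Type*} [Fintype V] [DecidableEq V]
    (p : V → Fin d → ℝ) (F : Set (Sym2 V)) : Set (Sym2 V) :=
  {e | ¬ e.IsDiag ∧ rrk d p (insert e F) = rrk d p F}

/-- A `k`-fold circuit `D` with principal partition `A_1, …, A_ℓ` is balanced if
`r_d (⋂ i, cl_d (D \ A_i)) = ℓ - k`. -/
def IsBalanced (d : ℕ) {V : Type*} [Fintype V] [DecidableEq V]
    (p : V → Fin d → ℝ) (D : Finset (Sym2 V)) (k : ℕ) : Prop :=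
  rrk d p (⋂ A ∈ {A | IsPrincipalPart d p D k A}, rcl d p ↑(D \ A)) + k =
    Set.ncard {A | IsPrincipalPart d p D k A}

/-- A vertex is monochromatic if all edges of `D` incident with it lie in a single
part of the principal partition (and technicolour otherwise). -/
def Monochromatic (d : ℕ) {V : Type*} [Fintype V] [DecidableEq V]
    (p : V → Fin d → ℝ) (D : Finset (Sym2 V)) (k : ℕ) (w : V) : Prop :=
  ∃ A, IsPrincipalPart d p D k A ∧ ∀ e ∈ D, w ∈ e → e ∈ A

/-- The graph `(W, E)` is `R_d`-rigid: it is a complete graph on at most `d+1`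
vertices, or `r_d(E) = d|W| - (d+1 choose 2)`. -/
def IsRigidOn (d : ℕ) {V : Type*} [Fintype V] [DecidableEq V]
    (p : V → Fin d → ℝ) (W : Finset V) (E : Finset (Sym2 V)) : Prop :=
  (W.card ≤ d + 1 ∧ ∀ u ∈ W, ∀ w ∈ W, u ≠ w → s(u, w) ∈ E) ∨
    (rrk d p ↑E : ℤ) + ((d + 1).choose 2 : ℤ) = (d : ℤ) * (W.card : ℤ)

/-- The edge set of the cone of (the graph with edge set) `D` over a new vertex,
realised as `none : Option V`. -/
def coneEdges {V : Type*} [Fintype V] [DecidableEq V] (D : Finset (Sym2 V)) :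
    Finset (Sym2 (Option V)) :=
  D.image (Sym2.map Option.some) ∪
    Finset.univ.image fun u : V => s((Option.some u : Option V), (none : Option V))

/-- The degree of the vertex `w` in the edge set `D`. -/
def degIn {V : Type*} [Fintype V] [DecidableEq V] (D : Finset (Sym2 V)) (w : V) : ℕ :=
  (D.filter fun e => w ∈ e).card

/-- The set of vertices incident with an edge of `F`. -/
def esupp {V : Type*} [Fintype V] [DecidableEq V] (F : Finset (Sym2 V)) : Finset V :=
  Finset.univ.filter fun w => ∃ e ∈ F, w ∈ e


set_option linter.unusedSectionVars false

section RigAux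

open Finset

variable {V : Type*} [Fintype V] [DecidableEq V]

noncomputable def spn (d : ℕ) (p : V → Fin d → ℝ) (F : Set (Sym2 V)) :
    Submodule ℝ (V × Fin d → ℝ) :=
  Submodule.span ℝ (rigRow d p '' F)

lemma rrk_def (d : ℕ) (p : V → Fin d → ℝ) (F : Set (Sym2 V)) :
    rrk d p F = Module.finrank ℝ (spn d p F) := rfl

lemma rigRow_mk (d : ℕ) (p : V → Fin d → ℝ) (u v : V) (wi : V × Fin d) :
    rigRow d p s(u, v) wi =
      ((if wi.1 = u then (1:ℝ) else 0) - (if wi.1 = v then (1:ℝ) else 0)) *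
        (p u wi.2 - p v wi.2) := rfl

lemma rigRow_apply_off (d : ℕ) (p : V → Fin d → ℝ) {u v x : V} (i : Fin d)
    (hxu : x ≠ u) (hxv : x ≠ v) : rigRow d p s(u, v) (x, i) = 0 := by
  rw [rigRow_mk]; simp [hxu, hxv]

lemma generic_ne {d : ℕ} {p : V → Fin d → ℝ} (hp : Generic d p) {u v : V}
    (huv : u ≠ v) (i : Fin d) : p u i ≠ p v i := by
  intro h
  have hinj : Function.Injective (fun vi : V × Fin d => p vi.1 vi.2) :=
    AlgebraicIndependent.injective hp
  exact huv (congrArg Prod.fst (hinj (a₁ := (u, i)) (a₂ := (v, i)) h))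

lemma rigRow_ne_zero {d : ℕ} {p : V → Fin d → ℝ} (hp : Generic d p) (hd : 1 ≤ d)
    {u v : V} (huv : u ≠ v) : rigRow d p s(u, v) ≠ 0 := by
  intro h
  have := congrFun h (u, ⟨0, hd⟩)
  rw [rigRow_mk] at this
  simp [huv, sub_eq_zero] at this
  exact generic_ne hp huv ⟨0, hd⟩ this

lemma spn_mono (d : ℕ) (p : V → Fin d → ℝ) {F G : Set (Sym2 V)} (h : F ⊆ G) :
    spn d p F ≤ spn d p G :=
  Submodule.span_mono (Set.image_mono h)

lemma rrk_mono (d : ℕ) (p : V → Fin d → ℝ) {F G : Set (Sym2 V)} (h : F ⊆ G) :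
    rrk d p F ≤ rrk d p G :=
  Submodule.finrank_mono (spn_mono d p h)

lemma spn_union (d : ℕ) (p : V → Fin d → ℝ) (F G : Set (Sym2 V)) :
    spn d p (F ∪ G) = spn d p F ⊔ spn d p G := by
  rw [spn, Set.image_union, Submodule.span_union]; rfl

lemma spn_insert (d : ℕ) (p : V → Fin d → ℝ) (e : Sym2 V) (F : Set (Sym2 V)) :
    spn d p (insert e F) = (ℝ ∙ rigRow d p e) ⊔ spn d p F := by
  rw [spn, Set.image_insert_eq, Submodule.span_insert]; rfl

lemma mem_spn_of_rrk_insert {d : ℕ} {p : V → Fin d → ℝ} {e : Sym2 V} {F : Set (Sym2 V)}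
    (h : rrk d p (insert e F) = rrk d p F) : rigRow d p e ∈ spn d p F := by
  have hle : spn d p F ≤ spn d p (insert e F) := spn_mono d p (Set.subset_insert e F)
  have : spn d p F = spn d p (insert e F) :=
    Submodule.eq_of_le_of_finrank_eq hle (by rw [← rrk_def, ← rrk_def, h])
  rw [this]
  exact Submodule.subset_span ⟨e, Set.mem_insert e F, rfl⟩

lemma rrk_insert_of_mem {d : ℕ} {p : V → Fin d → ℝ} {e : Sym2 V} {F : Set (Sym2 V)}
    (h : rigRow d p e ∈ spn d p F) : rrk d p (insert e F) = rrk d p F := by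
  have : spn d p (insert e F) = spn d p F := by
    refine le_antisymm ?_ (spn_mono d p (Set.subset_insert e F))
    rw [spn_insert]
    exact sup_le ((Submodule.span_singleton_le_iff_mem _ _).2 h) le_rfl
  rw [rrk_def, rrk_def, this]

lemma rrk_empty (d : ℕ) (p : V → Fin d → ℝ) : rrk d p (∅ : Set (Sym2 V)) = 0 := by
  rw [rrk_def, spn, Set.image_empty, Submodule.span_empty, finrank_bot]

lemma rrk_le_card (d : ℕ) (p : V → Fin d → ℝ) (X : Finset (Sym2 V)) :
    rrk d p ↑X ≤ X.card := by
  rw [rrk_def, spn, ← Finset.coe_image]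
  exact le_trans (finrank_span_finset_le_card (X.image (rigRow d p)))
    (Finset.card_image_le)

lemma finrank_sup_le (s t : Submodule ℝ (V × Fin d → ℝ)) :
    Module.finrank ℝ ↥(s ⊔ t) ≤ Module.finrank ℝ s + Module.finrank ℝ t := by
  have := Submodule.finrank_sup_add_finrank_inf_eq s t
  omega

lemma rrk_union_le (d : ℕ) (p : V → Fin d → ℝ) (F : Set (Sym2 V)) (S : Finset (Sym2 V)) :
    rrk d p (F ∪ ↑S) ≤ rrk d p F + S.card := by
  rw [rrk_def, spn_union]
  exact le_trans (finrank_sup_le _ _) (by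
    have := rrk_le_card d p S
    rw [rrk_def] at *
    omega)

lemma rrk_submod (d : ℕ) (p : V → Fin d → ℝ) (X Y : Finset (Sym2 V)) :
    rrk d p ↑(X ∪ Y) + rrk d p ↑(X ∩ Y) ≤ rrk d p ↑X + rrk d p ↑Y := by
  have h1 : spn d p ↑(X ∩ Y) ≤ spn d p ↑X ⊓ spn d p ↑Y := by
    refine le_inf (spn_mono d p ?_) (spn_mono d p ?_) <;>
      · intro e he
        simp only [Finset.coe_inter, Set.mem_inter_iff, Finset.mem_coe] at he
        simp [he.1, he.2]
  have h2 : rrk d p ↑(X ∪ Y) = Module.finrank ℝ ↥(spn d p ↑X ⊔ spn d p ↑Y) := by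
    rw [rrk_def, Finset.coe_union, spn_union]
  have h3 := Submodule.finrank_sup_add_finrank_inf_eq (spn d p ↑X) (spn d p ↑Y)
  have h4 : rrk d p ↑(X ∩ Y) ≤ Module.finrank ℝ ↥(spn d p ↑X ⊓ spn d p ↑Y) :=
    Submodule.finrank_mono h1
  rw [rrk_def (F := (↑X : Set (Sym2 V))), rrk_def (F := (↑Y : Set (Sym2 V)))]
  omega

lemma rrk_singleton {d : ℕ} {p : V → Fin d → ℝ} {e : Sym2 V}
    (h : rigRow d p e ≠ 0) : rrk d p {e} = 1 := by
  rw [rrk_def, spn, Set.image_singleton]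
  exact finrank_span_singleton h

end RigAux

section MatroidAux

open Finset

variable {V : Type*} [Fintype V] [DecidableEq V]

/-- `B` has no coloops (every edge is spanned by the rest). -/
def NoColoops (d : ℕ) (p : V → Fin d → ℝ) (B : Finset (Sym2 V)) : Prop :=
  ∀ f ∈ B, rrk d p (↑B \ {f}) = rrk d p ↑B

/-- Integer-valued nullity of a finite edge set. -/
noncomputable def nulZ (d : ℕ) (p : V → Fin d → ℝ) (X : Finset (Sym2 V)) : ℤ :=
  (X.card : ℤ) - (rrk d p ↑X : ℤ)

lemma nul_mono (d : ℕ) (p : V → Fin d → ℝ) {X Y : Finset (Sym2 V)} (h : X ⊆ Y) :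
    nulZ d p X ≤ nulZ d p Y := by
  have h1 : rrk d p ↑Y ≤ rrk d p ↑X + (Y \ X).card := by
    have hY : X ∪ (Y \ X) = Y := Finset.union_sdiff_of_subset h
    calc rrk d p ↑Y = rrk d p (↑X ∪ ↑(Y \ X)) := by rw [← Finset.coe_union, hY]
    _ ≤ rrk d p ↑X + (Y \ X).card := rrk_union_le d p _ _
  have h2 : (Y \ X).card + X.card = Y.card := Finset.card_sdiff_add_card_eq_card h
  have h3 := rrk_mono d p (Finset.coe_subset.2 h)
  unfold nulZ
  omega

lemma mem_spn_of_noColoops {d : ℕ} {p : V → Fin d → ℝ} {C : Finset (Sym2 V)}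
    (hC : NoColoops d p C) {f : Sym2 V} (hf : f ∈ C) :
    rigRow d p f ∈ spn d p (↑C \ {f}) := by
  apply mem_spn_of_rrk_insert
  have : insert f ((↑C : Set (Sym2 V)) \ {f}) = ↑C := by
    rw [Set.insert_diff_singleton, Set.insert_eq_self]
    exact hf
  rw [this]
  exact (hC f hf).symm

/-- Key augmentation contradiction: if `C` has no coloops, `f ∈ C \ B`, and
`B ∪ C` has the same nullity as `B`, we get a contradiction. -/
lemma no_coloop_aug {d : ℕ} {p : V → Fin d → ℝ} {B C : Finset (Sym2 V)}
    (hC : NoColoops d p C) {f : Sym2 V} (hfC : f ∈ C) (hfB : f ∉ B)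
    (hrank : rrk d p ↑(B ∪ C) = rrk d p ↑B + (C \ B).card) : False := by
  have hfU : f ∈ B ∪ C := Finset.mem_union_right _ hfC
  have hmem : rigRow d p f ∈ spn d p (↑((B ∪ C).erase f)) := by
    refine Submodule.span_mono (Set.image_mono ?_) (mem_spn_of_noColoops hC hfC)
    rw [Finset.coe_erase]
    intro x hx
    exact ⟨Finset.mem_coe.2 (Finset.mem_union_right _ (Finset.mem_coe.1 hx.1)), hx.2⟩
  have heq : rrk d p ↑(B ∪ C) = rrk d p ↑((B ∪ C).erase f) := by
    have h1 : (insert f (↑((B ∪ C).erase f) : Set (Sym2 V))) = ↑(B ∪ C) := by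
      rw [← Finset.coe_insert, Finset.insert_erase hfU]
    rw [← h1]
    exact rrk_insert_of_mem hmem
  have hsub : (B ∪ C).erase f ⊆ B ∪ (C \ B).erase f := by
    intro x hx
    rw [Finset.mem_erase] at hx
    rcases Finset.mem_union.1 hx.2 with h | h
    · exact Finset.mem_union_left _ h
    · by_cases hxB : x ∈ B
      · exact Finset.mem_union_left _ hxB
      · exact Finset.mem_union_right _ (Finset.mem_erase.2 ⟨hx.1, Finset.mem_sdiff.2 ⟨h, hxB⟩⟩)
  have h2 : rrk d p ↑((B ∪ C).erase f) ≤ rrk d p ↑B + ((C \ B).erase f).card := by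
    refine le_trans (rrk_mono d p (Finset.coe_subset.2 hsub)) ?_
    rw [Finset.coe_union]
    exact rrk_union_le d p _ _
  have hfCB : f ∈ C \ B := Finset.mem_sdiff.2 ⟨hfC, hfB⟩
  have h3 : ((C \ B).erase f).card + 1 = (C \ B).card := by
    rw [Finset.card_erase_of_mem hfCB]
    have : 1 ≤ (C \ B).card := Finset.card_pos.2 ⟨f, hfCB⟩
    omega
  omega

end MatroidAux

section MatroidAux2

open Finset

variable {V : Type*} [Fintype V] [DecidableEq V]

lemma rrk_erase_ge {d : ℕ} {p : V → Fin d → ℝ} {X : Finset (Sym2 V)} {f : Sym2 V}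
    (hf : f ∈ X) : rrk d p ↑X ≤ rrk d p ↑(X.erase f) + 1 := by
  have h1 : X ⊆ X.erase f ∪ {f} := by
    intro x hx
    by_cases hxf : x = f
    · exact Finset.mem_union_right _ (Finset.mem_singleton.2 hxf)
    · exact Finset.mem_union_left _ (Finset.mem_erase.2 ⟨hxf, hx⟩)
  calc rrk d p ↑X ≤ rrk d p ↑(X.erase f ∪ {f}) := rrk_mono d p (Finset.coe_subset.2 h1)
  _ = rrk d p (↑(X.erase f) ∪ ↑({f} : Finset (Sym2 V))) := by rw [Finset.coe_union]
  _ ≤ rrk d p ↑(X.erase f) + ({f} : Finset (Sym2 V)).card := rrk_union_le d p _ _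
  _ = rrk d p ↑(X.erase f) + 1 := by rw [Finset.card_singleton]

/-- Every finite edge set contains a coloop-free subset of the same nullity. -/
lemma exists_core (d : ℕ) (p : V → Fin d → ℝ) (X : Finset (Sym2 V)) :
    ∃ B ⊆ X, NoColoops d p B ∧ nulZ d p B = nulZ d p X := by
  induction X using Finset.strongInduction with
  | _ X ih =>
    by_cases hX : NoColoops d p X
    · exact ⟨X, Finset.Subset.refl X, hX, rfl⟩
    · rw [NoColoops] at hX
      push_neg at hX
      obtain ⟨f, hfX, hfne⟩ := hX
      have hcoe : (↑X \ {f} : Set (Sym2 V)) = ↑(X.erase f) := by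
        rw [Finset.coe_erase]
      rw [hcoe] at hfne
      have hlt : X.erase f ⊂ X := Finset.erase_ssubset hfX
      obtain ⟨B, hBsub, hBnc, hBnul⟩ := ih (X.erase f) hlt
      refine ⟨B, le_trans hBsub (Finset.erase_subset f X), hBnc, ?_⟩
      rw [hBnul]
      have h1 := rrk_erase_ge (d := d) (p := p) hfX
      have h2 := rrk_mono d p (Finset.coe_subset.2 (Finset.erase_subset f X))
      have h4 : (X.erase f).card = X.card - 1 := Finset.card_erase_of_mem hfX
      have h5 : 1 ≤ X.card := Finset.card_pos.2 ⟨f, hfX⟩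
      unfold nulZ
      have h6 : 1 ≤ rrk d p ↑X := by omega
      have h3 : rrk d p ↑(X.erase f) = rrk d p ↑X - 1 := by omega
      rw [h3, h4]
      push_cast [h5, h6]
      ring

/-- Claim 1: two distinct coloop-free subsets of the coloop-free set `D` whose
nullity is one less than that of `D` must union to `D`. -/
lemma union_eq_of_two_circuits {d : ℕ} {p : V → Fin d → ℝ} {D B B' : Finset (Sym2 V)}
    (hD : NoColoops d p D) (hB : NoColoops d p B) (hB' : NoColoops d p B')
    (hBD : B ⊆ D) (hB'D : B' ⊆ D)
    (hnB : nulZ d p B = nulZ d p D - 1) (hnB' : nulZ d p B' = nulZ d p D - 1)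
    (hne : B ≠ B') : B ∪ B' = D := by
  have key : ∀ C C' : Finset (Sym2 V), NoColoops d p C' → (∃ f ∈ C', f ∉ C) →
      nulZ d p (C ∪ C') ≠ nulZ d p C := by
    rintro C C' hC' ⟨f, hfC', hfC⟩ hn
    have hcard : (C ∪ C').card = C.card + (C' \ C).card := by
      rw [← Finset.union_sdiff_self_eq_union]
      exact Finset.card_union_of_disjoint Finset.disjoint_sdiff
    have hrank : rrk d p ↑(C ∪ C') = rrk d p ↑C + (C' \ C).card := by
      unfold nulZ at hn
      have hle : rrk d p ↑(C ∪ C') ≤ rrk d p ↑C + (C' \ C).card := by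
        have hc : (↑(C ∪ C') : Set (Sym2 V)) = ↑C ∪ ↑(C' \ C) := by
          rw [← Finset.coe_union, Finset.union_sdiff_self_eq_union]
        rw [hc]
        exact rrk_union_le d p _ _
      omega
    exact no_coloop_aug hC' hfC' hfC hrank
  have hnU : nulZ d p (B ∪ B') = nulZ d p D := by
    have hmD : nulZ d p (B ∪ B') ≤ nulZ d p D := nul_mono d p (Finset.union_subset hBD hB'D)
    by_cases hss : B' ⊆ B
    · -- then B ⊄ B' would fail only if equal; pick f ∈ B \ B'
      have hnss : ¬B ⊆ B' := fun h => hne (Finset.Subset.antisymm h hss)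
      obtain ⟨f, hf1, hf2⟩ := Finset.not_subset.1 hnss
      have h := key B' B hB ⟨f, hf1, hf2⟩
      rw [Finset.union_comm B' B] at h
      have hm : nulZ d p B' ≤ nulZ d p (B ∪ B') := nul_mono d p Finset.subset_union_right
      omega
    · obtain ⟨f, hf1, hf2⟩ := Finset.not_subset.1 hss
      have h := key B B' hB' ⟨f, hf1, hf2⟩
      have hm : nulZ d p B ≤ nulZ d p (B ∪ B') := nul_mono d p Finset.subset_union_left
      omega
  by_contra hUD
  have hUsub : B ∪ B' ⊆ D := Finset.union_subset hBD hB'D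
  obtain ⟨e, heD, heU⟩ := Finset.not_subset.1 (fun h => hUD (Finset.Subset.antisymm hUsub h))
  set U := B ∪ B' with hU
  have hcard : D.card = U.card + (D \ U).card := by
    have := Finset.card_sdiff_add_card_eq_card hUsub
    omega
  have hrk : rrk d p ↑D = rrk d p ↑U + (D \ U).card := by
    unfold nulZ at hnU
    have hle : rrk d p ↑D ≤ rrk d p ↑U + (D \ U).card := by
      have hc : (↑D : Set (Sym2 V)) = ↑U ∪ ↑(D \ U) := by
        rw [← Finset.coe_union, Finset.union_sdiff_of_subset hUsub]
      rw [hc]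
      exact rrk_union_le d p _ _
    omega
  have heDU : e ∈ D \ U := Finset.mem_sdiff.2 ⟨heD, heU⟩
  have hDer : rrk d p ↑(D.erase e) = rrk d p ↑D := by
    have := hD e heD
    rwa [← Finset.coe_erase] at this
  have hsub : D.erase e ⊆ U ∪ (D \ U).erase e := by
    intro x hx
    rw [Finset.mem_erase] at hx
    by_cases hxU : x ∈ U
    · exact Finset.mem_union_left _ hxU
    · exact Finset.mem_union_right _
        (Finset.mem_erase.2 ⟨hx.1, Finset.mem_sdiff.2 ⟨hx.2, hxU⟩⟩)
  have h2 : rrk d p ↑(D.erase e) ≤ rrk d p ↑U + ((D \ U).erase e).card := by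
    refine le_trans (rrk_mono d p (Finset.coe_subset.2 hsub)) ?_
    rw [Finset.coe_union]
    exact rrk_union_le d p _ _
  have h3 : ((D \ U).erase e).card + 1 = (D \ U).card := by
    rw [Finset.card_erase_of_mem heDU]
    have : 1 ≤ (D \ U).card := Finset.card_pos.2 ⟨e, heDU⟩
    omega
  omega

end MatroidAux2

section ChainAux

open Finset

variable {V : Type*} [Fintype V] [DecidableEq V]

lemma nul_chain (d : ℕ) (p : V → Fin d → ℝ) (M : Finset (Sym2 V))
    {α : Type*} (f : α → Finset (Sym2 V)) (Ps : Finset α) (hne : Ps.Nonempty) :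
    ∀ _ : (∀ X ∈ Ps, f X ⊆ M),
    (∑ X ∈ Ps, nulZ d p (f X)) - ((Ps.card : ℤ) - 1) * nulZ d p M
      ≤ nulZ d p (Ps.inf f) := by
  induction hne using Finset.Nonempty.cons_induction with
  | singleton X => intro _; simp
  | cons X s hX hs ih =>
    intro hsub
    have hXM : f X ⊆ M := hsub X (Finset.mem_cons_self X s)
    have ihs := ih fun Y hY => hsub Y (Finset.mem_cons_of_mem hY)
    obtain ⟨Y, hY⟩ := hs
    have hIY : s.inf f ≤ f Y := Finset.inf_le hY
    have hIM : s.inf f ⊆ M := le_trans hIY (hsub Y (Finset.mem_cons_of_mem hY))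
    set I := s.inf f with hI
    have hinf : (Finset.cons X s hX).inf f = f X ∩ I := by
      rw [Finset.inf_cons]; rfl
    have hsupm : nulZ d p (f X) + nulZ d p I - nulZ d p (f X ∪ I)
        ≤ nulZ d p (f X ∩ I) := by
      have h1 := rrk_submod d p (f X) I
      have h2 : (f X ∪ I).card + (f X ∩ I).card = (f X).card + I.card :=
        Finset.card_union_add_card_inter (f X) I
      unfold nulZ
      omega
    have hUM : nulZ d p (f X ∪ I) ≤ nulZ d p M :=
      nul_mono d p (Finset.union_subset hXM hIM)
    rw [hinf, Finset.sum_cons, Finset.card_cons]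
    have hring : ((s.card + 1 : ℕ) - 1 : ℤ) * nulZ d p M
        = ((s.card : ℤ) - 1) * nulZ d p M + nulZ d p M := by push_cast; ring
    rw [hring]
    linarith

lemma dim_chain (d : ℕ) (p : V → Fin d → ℝ) (M : Finset (Sym2 V))
    {α : Type*} (f : α → Finset (Sym2 V)) (Ps : Finset α) (hne : Ps.Nonempty) :
    ∀ _ : (∀ X ∈ Ps, f X ⊆ M),
    (∑ X ∈ Ps, (rrk d p ↑(f X) : ℤ)) - ((Ps.card : ℤ) - 1) * (rrk d p ↑M : ℤ)
      ≤ (Module.finrank ℝ ↥(Ps.inf fun X => spn d p ↑(f X)) : ℤ) := by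
  induction hne using Finset.Nonempty.cons_induction with
  | singleton X =>
    intro _
    rw [Finset.inf_singleton, Finset.sum_singleton, Finset.card_singleton]
    simp [rrk_def]
  | cons X s hX hs ih =>
    intro hsub
    have hXM : f X ⊆ M := hsub X (Finset.mem_cons_self X s)
    have ihs := ih fun Y hY => hsub Y (Finset.mem_cons_of_mem hY)
    obtain ⟨Y, hY⟩ := hs
    set W := s.inf fun X => spn d p ↑(f X) with hW
    have hWY : W ≤ spn d p ↑(f Y) := Finset.inf_le hY
    have hWM : W ≤ spn d p ↑M :=
      le_trans hWY (spn_mono d p (Finset.coe_subset.2 (hsub Y (Finset.mem_cons_of_mem hY))))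
    have hinf : (Finset.cons X s hX).inf (fun X => spn d p ↑(f X))
        = spn d p ↑(f X) ⊓ W := by
      rw [Finset.inf_cons]
    have hXMle : spn d p ↑(f X) ≤ spn d p ↑M := spn_mono d p (Finset.coe_subset.2 hXM)
    have heq := Submodule.finrank_sup_add_finrank_inf_eq (spn d p ↑(f X)) W
    have hsup : Module.finrank ℝ ↥(spn d p ↑(f X) ⊔ W) ≤ Module.finrank ℝ ↥(spn d p ↑M) :=
      Submodule.finrank_mono (sup_le hXMle hWM)
    rw [hinf, Finset.sum_cons, Finset.card_cons]
    have hring : ((s.card + 1 : ℕ) - 1 : ℤ) * (rrk d p ↑M : ℤ)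
        = ((s.card : ℤ) - 1) * (rrk d p ↑M : ℤ) + (rrk d p ↑M : ℤ) := by push_cast; ring
    rw [hring]
    rw [← rrk_def d p ↑(f X)] at heq
    rw [← rrk_def d p ↑M] at hsup
    have h1 : (Module.finrank ℝ ↥(spn d p ↑(f X) ⊔ W) : ℤ)
        + (Module.finrank ℝ ↥(spn d p ↑(f X) ⊓ W) : ℤ)
        = (rrk d p ↑(f X) : ℤ) + (Module.finrank ℝ ↥W : ℤ) := by
      exact_mod_cast congrArg (Nat.cast : ℕ → ℤ) heq
    have h2 : (Module.finrank ℝ ↥(spn d p ↑(f X) ⊔ W) : ℤ)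
        ≤ (rrk d p ↑M : ℤ) := by exact_mod_cast hsup
    linarith

lemma mem_inf_finsets {α β : Type*} [DecidableEq β] [Fintype β]
    (S : Finset α) (f : α → Finset β) (x : β) :
    x ∈ S.inf f ↔ ∀ a ∈ S, x ∈ f a := by
  induction S using Finset.cons_induction with
  | empty => simp [Finset.inf_empty, Finset.top_eq_univ]
  | cons a s ha ih =>
    rw [Finset.inf_cons]
    constructor
    · intro hx b hb
      rcases Finset.mem_cons.1 hb with rfl | hb
      · exact (Finset.mem_inter.1 (by exact hx)).1
      · exact ih.1 (Finset.mem_inter.1 (by exact hx)).2 b hb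
    · intro hall
      exact Finset.mem_inter.2 ⟨hall a (Finset.mem_cons_self a s),
        ih.2 fun b hb => hall b (Finset.mem_cons_of_mem hb)⟩

lemma mem_inf_submodule {α M : Type*} [AddCommMonoid M] [Module ℝ M]
    (S : Finset α) (g : α → Submodule ℝ M) (w : M) :
    w ∈ S.inf g ↔ ∀ a ∈ S, w ∈ g a := by
  rw [Finset.inf_eq_iInf]
  simp [Submodule.mem_iInf]

end ChainAux

section FunctionalAux

open Finset

variable {V : Type*} [Fintype V] [DecidableEq V]

lemma sum_delta_mul (u v : V) (huv : u ≠ v) (g : V → ℝ) :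
    ∑ x : V, ((if x = u then (1:ℝ) else 0) - (if x = v then 1 else 0)) * g x
      = g u - g v := by
  have : ∀ x : V, ((if x = u then (1:ℝ) else 0) - (if x = v then 1 else 0)) * g x
      = (if x = u then g x else 0) - (if x = v then g x else 0) := by
    intro x
    by_cases h1 : x = u
    · have h2 : x ≠ v := fun hv => huv (h1.symm.trans hv)
      simp [h1, h2, huv]
    · by_cases h2 : x = v
      · have h3 : v ≠ u := fun hv => huv hv.symm
        simp [h1, h2, h3]
      · simp [h1, h2]
  rw [Finset.sum_congr rfl fun x _ => this x, Finset.sum_sub_distrib,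
    Finset.sum_ite_eq' Finset.univ u g, Finset.sum_ite_eq' Finset.univ v g]
  simp

/-- The translation functional in coordinate `i`. -/
noncomputable def transF (d : ℕ) (V : Type*) [Fintype V] (i : Fin d) :
    (V × Fin d → ℝ) →ₗ[ℝ] ℝ :=
  ∑ x : V, LinearMap.proj (φ := fun _ : V × Fin d => ℝ) (x, i)

lemma transF_apply (d : ℕ) (i : Fin d) (w : V × Fin d → ℝ) :
    transF d V i w = ∑ x : V, w (x, i) := by
  simp [transF]

/-- The rotation (skew) functional in coordinates `i j`. -/
noncomputable def skewF (d : ℕ) {V : Type*} [Fintype V] (p : V → Fin d → ℝ) (i j : Fin d) :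
    (V × Fin d → ℝ) →ₗ[ℝ] ℝ :=
  ∑ x : V, (p x j • LinearMap.proj (φ := fun _ : V × Fin d => ℝ) (x, i)
    - p x i • LinearMap.proj (φ := fun _ : V × Fin d => ℝ) (x, j))

lemma skewF_apply (d : ℕ) (p : V → Fin d → ℝ) (i j : Fin d) (w : V × Fin d → ℝ) :
    skewF d p i j w = ∑ x : V, (p x j * w (x, i) - p x i * w (x, j)) := by
  simp [skewF, Finset.sum_apply, LinearMap.sum_apply]

lemma spn_le_ker_transF (d : ℕ) (p : V → Fin d → ℝ) (F : Set (Sym2 V)) (i : Fin d) :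
    spn d p F ≤ LinearMap.ker (transF d V i) := by
  rw [spn, Submodule.span_le]
  rintro _ ⟨e, -, rfl⟩
  induction e using Sym2.ind with
  | _ u v =>
    rw [SetLike.mem_coe, LinearMap.mem_ker, transF_apply]
    by_cases huv : u = v
    · subst huv
      simp [rigRow_mk]
    · have := sum_delta_mul u v huv (fun _ => p u i - p v i)
      simpa [rigRow_mk] using this.trans (sub_self _)

lemma spn_le_ker_skewF (d : ℕ) (p : V → Fin d → ℝ) (F : Set (Sym2 V)) (i j : Fin d) :
    spn d p F ≤ LinearMap.ker (skewF d p i j) := by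
  rw [spn, Submodule.span_le]
  rintro _ ⟨e, -, rfl⟩
  induction e using Sym2.ind with
  | _ u v =>
    rw [SetLike.mem_coe, LinearMap.mem_ker, skewF_apply]
    by_cases huv : u = v
    · subst huv
      simp [rigRow_mk]
    · have hterm : ∀ x : V,
          p x j * rigRow d p s(u, v) (x, i) - p x i * rigRow d p s(u, v) (x, j)
          = ((if x = u then (1:ℝ) else 0) - (if x = v then 1 else 0)) *
              (p x j * (p u i - p v i) - p x i * (p u j - p v j)) := by
        intro x
        rw [rigRow_mk, rigRow_mk]
        ring
      rw [Finset.sum_congr rfl fun x _ => hterm x,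
        sum_delta_mul u v huv (fun x => p x j * (p u i - p v i) - p x i * (p u j - p v j))]
      ring

/-- Vanishing at all coordinates of a vertex. -/
noncomputable def vanishAt (d : ℕ) (V : Type*) [Fintype V] (x : V) : Submodule ℝ (V × Fin d → ℝ) :=
  ⨅ i : Fin d, LinearMap.ker (LinearMap.proj (φ := fun _ : V × Fin d => ℝ) (x, i))

lemma mem_vanishAt {d : ℕ} {x : V} {w : V × Fin d → ℝ} :
    w ∈ vanishAt d V x ↔ ∀ i, w (x, i) = 0 := by
  simp [vanishAt, Submodule.mem_iInf, LinearMap.mem_ker]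

lemma spn_le_vanishAt (d : ℕ) (p : V → Fin d → ℝ) {F : Set (Sym2 V)} {x : V}
    (h : ∀ e ∈ F, x ∉ e) : spn d p F ≤ vanishAt d V x := by
  rw [spn, Submodule.span_le]
  rintro _ ⟨e, he, rfl⟩
  rw [SetLike.mem_coe, mem_vanishAt]
  intro i
  induction e using Sym2.ind with
  | _ u v =>
    have hx := h _ he
    rw [Sym2.mem_iff] at hx
    push_neg at hx
    exact rigRow_apply_off d p i hx.1 hx.2

end FunctionalAux

section VectorChar

open Finset

variable {V : Type*} [Fintype V] [DecidableEq V]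

lemma sum_reduce_pair {u v : V} (huv : u ≠ v) (f : V → ℝ)
    (hf : ∀ x : V, x ≠ u → x ≠ v → f x = 0) :
    ∑ x : V, f x = f u + f v := by
  rw [← Finset.sum_subset (Finset.subset_univ ({u, v} : Finset V))]
  · rw [Finset.sum_pair huv]
  · intro x _ hx
    rw [Finset.mem_insert, Finset.mem_singleton] at hx
    push_neg at hx
    exact hf x hx.1 hx.2

/-- Any vector supported on two vertices which is orthogonal to the translations
and the rotations is a multiple of the rigidity row of the edge joining them. -/
lemma vector_char {d : ℕ} {p : V → Fin d → ℝ} (hp : Generic d p) (hd : 1 ≤ d)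
    {u v : V} (huv : u ≠ v) (w : V × Fin d → ℝ)
    (hvan : ∀ x : V, x ≠ u → x ≠ v → ∀ i, w (x, i) = 0)
    (htr : ∀ i, transF d V i w = 0)
    (hsk : ∀ i j, skewF d p i j w = 0) :
    ∃ c : ℝ, w = c • rigRow d p s(u, v) := by
  set i0 : Fin d := ⟨0, hd⟩ with hi0
  have hq0 : p u i0 - p v i0 ≠ 0 := sub_ne_zero.2 (generic_ne hp huv i0)
  set c : ℝ := w (u, i0) / (p u i0 - p v i0) with hc
  refine ⟨c, ?_⟩
  have hv : ∀ i, w (v, i) = -w (u, i) := by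
    intro i
    have h := htr i
    rw [transF_apply, sum_reduce_pair huv _ (fun x hx1 hx2 => hvan x hx1 hx2 i)] at h
    linarith
  have hu : ∀ j, w (u, j) * (p u i0 - p v i0) = w (u, i0) * (p u j - p v j) := by
    intro j
    have h := hsk i0 j
    rw [skewF_apply, sum_reduce_pair huv _
      (fun x hx1 hx2 => by rw [hvan x hx1 hx2 i0, hvan x hx1 hx2 j]; ring)] at h
    rw [hv i0, hv j] at h
    ring_nf at h ⊢
    linarith
  funext xi
  obtain ⟨x, i⟩ := xi
  rw [Pi.smul_apply, rigRow_mk, smul_eq_mul]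
  by_cases hx1 : x = u
  · subst hx1
    have h2 : x ≠ v := huv
    rw [if_pos rfl, if_neg h2]
    rw [hc]
    field_simp
    simpa using hu i
  · by_cases hx2 : x = v
    · subst hx2
      have h3 : x ≠ u := hx1
      rw [if_neg h3, if_pos rfl, hv i]
      rw [hc]
      field_simp
      have := hu i
      ring_nf at this ⊢
      linarith
    · rw [hvan x hx1 hx2 i, if_neg hx1, if_neg hx2]
      ring

end VectorChar
/-- Theorem 3.12: a `k`-fold `R_d`-circuit with at most two technicolour vertices
is balanced. -/
theorem kfold_circuit_two_technicolour_balanced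
    (d k : ℕ) (hd : 1 ≤ d) (hk : 1 ≤ k)
    {V : Type*} [Fintype V] [DecidableEq V]
    (D : Finset (Sym2 V)) (hsimple : ∀ e ∈ D, ¬ e.IsDiag)
    (hcov : ∀ w : V, ∃ e ∈ D, w ∈ e)
    (p : V → Fin d → ℝ) (hp : Generic d p)
    (hD : IsKFoldCircuit d p D k)
    (htech : ({w : V | ¬ Monochromatic d p D k w}).ncard ≤ 2) :
    IsBalanced d p D k := by
  classical
  obtain ⟨hDnc, hDrank⟩ := hD
  have hDnc' : NoColoops d p D := hDnc
  have hDne : D.Nonempty := by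
    rcases Finset.eq_empty_or_nonempty D with h | h
    · subst h; rw [Finset.card_empty] at hDrank; omega
    · exact h
  set P : Finset (Finset (Sym2 V)) :=
    D.powerset.filter (fun B => IsKFoldCircuit d p B (k - 1)) with hP
  have hmemP : ∀ B : Finset (Sym2 V), B ∈ P ↔ B ⊆ D ∧ IsKFoldCircuit d p B (k - 1) := by
    intro B; simp [hP, Finset.mem_filter, Finset.mem_powerset]
  have hnulD : nulZ d p D = (k : ℤ) := by unfold nulZ; omega
  have hnulB : ∀ B ∈ P, nulZ d p B = (k : ℤ) - 1 := by
    intro B hB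
    have h := ((hmemP B).1 hB).2.2
    unfold nulZ
    omega
  have hncB : ∀ B ∈ P, NoColoops d p B := fun B hB => ((hmemP B).1 hB).2.1
  have hsubP : ∀ B ∈ P, B ⊆ D := fun B hB => ((hmemP B).1 hB).1
  have hcover : ∀ e ∈ D, ∃ B ∈ P, e ∉ B := by
    intro e he
    obtain ⟨B, hBsub, hBnc, hBnul⟩ := exists_core d p (D.erase e)
    have hDe : nulZ d p (D.erase e) = (k : ℤ) - 1 := by
      have h1 : rrk d p ↑(D.erase e) = rrk d p ↑D := by
        have := hDnc e he; rwa [← Finset.coe_erase] at this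
      unfold nulZ
      rw [h1, Finset.card_erase_of_mem he]
      have h2 : 1 ≤ D.card := Finset.card_pos.2 ⟨e, he⟩
      omega
    have hBD : B ⊆ D := hBsub.trans (Finset.erase_subset e D)
    have hBrank : rrk d p ↑B + (k - 1) = B.card := by
      rw [hDe] at hBnul
      unfold nulZ at hBnul
      have := rrk_le_card d p B
      omega
    exact ⟨B, (hmemP B).2 ⟨hBD, hBnc, hBrank⟩,
      fun hc => (Finset.mem_erase.1 (hBsub hc)).1 rfl⟩
  have hPne : P.Nonempty := by
    obtain ⟨e, he⟩ := hDne
    obtain ⟨B, hB, -⟩ := hcover e he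
    exact ⟨B, hB⟩
  have hunion : ∀ B ∈ P, ∀ B' ∈ P, B ≠ B' → B ∪ B' = D := by
    intro B hB B' hB' hne
    exact union_eq_of_two_circuits hDnc' (hncB B hB) (hncB B' hB') (hsubP B hB)
      (hsubP B' hB') (by rw [hnulB B hB, hnulD]) (by rw [hnulB B' hB', hnulD]) hne
  -- the set of principal parts
  have hinjP : Set.InjOn (fun B => D \ B) ↑P := by
    intro B hB B' hB' h
    have h0 : D \ B = D \ B' := h
    have h1 : D \ (D \ B) = D \ (D \ B') := by rw [h0]
    rwa [Finset.sdiff_sdiff_eq_self (hsubP B (Finset.mem_coe.1 hB)),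
      Finset.sdiff_sdiff_eq_self (hsubP B' (Finset.mem_coe.1 hB'))] at h1
  have hparts : {A | IsPrincipalPart d p D k A} = ↑(P.image (fun B => D \ B)) := by
    ext A
    simp only [Set.mem_setOf_eq, Finset.coe_image, Set.mem_image, Finset.mem_coe]
    constructor
    · rintro ⟨B, hBD, hBc, rfl⟩
      exact ⟨B, (hmemP B).2 ⟨hBD, hBc⟩, rfl⟩
    · rintro ⟨B, hB, rfl⟩
      exact ⟨B, hsubP B hB, ((hmemP B).1 hB).2, rfl⟩
  set l := P.card with hl
  have hncard : ({A | IsPrincipalPart d p D k A}).ncard = l := by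
    rw [hparts, Set.ncard_coe_finset, Finset.card_image_of_injOn hinjP]
  have hZdef : (⋂ A ∈ {A | IsPrincipalPart d p D k A}, rcl d p ↑(D \ A))
      = ⋂ B ∈ P, rcl d p ↑B := by
    rw [hparts]
    ext e
    simp only [Set.mem_iInter, Finset.coe_image, Set.mem_image, Finset.mem_coe]
    constructor
    · intro h B hB
      have := h (D \ B) ⟨B, hB, rfl⟩
      rwa [Finset.sdiff_sdiff_eq_self (hsubP B hB)] at this
    · rintro h A ⟨B, hB, rfl⟩
      rw [Finset.sdiff_sdiff_eq_self (hsubP B hB)]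
      exact h B hB
  set W := P.inf (fun B => spn d p ↑B) with hWdef
  -- partition facts
  have hdisj : ∀ B ∈ P, ∀ B' ∈ P, B ≠ B' → Disjoint (D \ B) (D \ B') := by
    intro B hB B' hB' hne
    rw [Finset.disjoint_left]
    intro e he1 he2
    rw [Finset.mem_sdiff] at he1 he2
    have h1 : e ∈ B ∪ B' := (hunion B hB B' hB' hne).symm ▸ he1.1
    rcases Finset.mem_union.1 h1 with h | h
    · exact he1.2 h
    · exact he2.2 h
  have hbiU : P.biUnion (fun B => D \ B) = D := by
    apply Finset.Subset.antisymm
    · intro e he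
      obtain ⟨B, hB, heB⟩ := Finset.mem_biUnion.1 he
      exact (Finset.mem_sdiff.1 heB).1
    · intro e he
      obtain ⟨B, hB, heB⟩ := hcover e he
      exact Finset.mem_biUnion.2 ⟨B, hB, Finset.mem_sdiff.2 ⟨he, heB⟩⟩
  have hsumcard : ∑ B ∈ P, (D \ B).card = D.card := by
    rw [← Finset.card_biUnion hdisj, hbiU]
  have hsumrrk : ∑ B ∈ P, (rrk d p ↑B : ℤ)
      = (l : ℤ) * ((D.card : ℤ) - k + 1) - D.card := by
    have h1 : ∀ B ∈ P, (rrk d p ↑B : ℤ)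
        = (D.card : ℤ) - ((D \ B).card : ℤ) - ((k : ℤ) - 1) := by
      intro B hB
      have h2 := hnulB B hB
      unfold nulZ at h2
      have h3 := Finset.card_sdiff_add_card_eq_card (hsubP B hB)
      omega
    rw [Finset.sum_congr rfl h1]
    rw [Finset.sum_sub_distrib, Finset.sum_sub_distrib, Finset.sum_const, Finset.sum_const,
      nsmul_eq_mul, nsmul_eq_mul]
    have h4 : ∑ B ∈ P, ((D \ B).card : ℤ) = (D.card : ℤ) := by
      rw [← Nat.cast_sum, hsumcard]
    rw [h4, ← hl]
    ring
  have hrrkD : (rrk d p ↑D : ℤ) = (D.card : ℤ) - k := by omega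
  have hdim : (l : ℤ) - k ≤ (Module.finrank ℝ ↥W : ℤ) := by
    have h := dim_chain d p D id P hPne (fun B hB => hsubP B hB)
    simp only [id_eq] at h
    rw [hsumrrk, hrrkD, ← hl] at h
    change _ ≤ (Module.finrank ℝ ↥W : ℤ) at h
    have hid : (l : ℤ) * ((D.card : ℤ) - k + 1) - D.card
        - ((l : ℤ) - 1) * ((D.card : ℤ) - k) = (l : ℤ) - k := by ring
    linarith
  -- claim 3 : k ≤ l
  have hPinf : P.inf id = ∅ := by
    rw [Finset.eq_empty_iff_forall_notMem]
    intro e he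
    rw [mem_inf_finsets] at he
    obtain ⟨B0, hB0⟩ := hPne
    have heD : e ∈ D := hsubP B0 hB0 (he B0 hB0)
    obtain ⟨B, hB, heB⟩ := hcover e heD
    exact heB (he B hB)
  have hnulempty : nulZ d p (∅ : Finset (Sym2 V)) = 0 := by
    unfold nulZ
    rw [Finset.card_empty, Finset.coe_empty, rrk_empty]
    rfl
  have hkl : (k : ℤ) ≤ l := by
    have h := nul_chain d p D id P hPne (fun B hB => hsubP B hB)
    simp only [id_eq] at h
    rw [hPinf, hnulempty, hnulD] at h
    have hsum : ∑ B ∈ P, nulZ d p B = (l : ℤ) * ((k : ℤ) - 1) := by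
      rw [Finset.sum_congr rfl (fun B hB => hnulB B hB), Finset.sum_const, nsmul_eq_mul, ← hl]
    rw [hsum, ← hl] at h
    have hid : (l : ℤ) * ((k : ℤ) - 1) - ((l : ℤ) - 1) * k = (k : ℤ) - l := by ring
    linarith
  by_cases hWbot : W = ⊥
  · -- the intersection of the closures is empty
    have hfr : Module.finrank ℝ ↥W = 0 := by rw [hWbot]; exact finrank_bot ℝ _
    have hlk : (l : ℤ) ≤ k := by
      rw [hfr] at hdim
      push_cast at hdim
      linarith
    have hZe : (⋂ B ∈ P, rcl d p ↑B) = (∅ : Set (Sym2 V)) := by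
      rw [Set.eq_empty_iff_forall_notMem]
      intro e he
      rw [Set.mem_iInter₂] at he
      have hrow : rigRow d p e ∈ W := by
        rw [hWdef, mem_inf_submodule]
        intro B hB
        have h1 : (insert e (↑B : Set (Sym2 V))) = insert e ↑B := rfl
        exact mem_spn_of_rrk_insert (he B hB).2
      rw [hWbot, Submodule.mem_bot] at hrow
      obtain ⟨B0, hB0⟩ := hPne
      have hnd := (he B0 hB0).1
      obtain ⟨⟨u, v⟩, rfl⟩ := e.exists_rep
      have huv : u ≠ v := fun h => hnd (Sym2.mk_isDiag_iff.2 h)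
      exact rigRow_ne_zero hp hd huv hrow
    unfold IsBalanced
    rw [hZdef, hZe, rrk_empty, hncard]
    omega
  · -- W ≠ ⊥ : there is a common closure edge s(u,v) on the technicolour vertices
    set T := {w : V | ¬Monochromatic d p D k w} with hT
    have hmono : ∀ x : V, x ∉ T → W ≤ vanishAt d V x := by
      intro x hx
      rw [hT, Set.mem_setOf_eq, not_not] at hx
      obtain ⟨A, ⟨B0, hB0D, hB0c, hAeq⟩, hall⟩ := hx
      have hB0 : B0 ∈ P := (hmemP B0).2 ⟨hB0D, hB0c⟩
      refine le_trans (Finset.inf_le hB0) (spn_le_vanishAt d p ?_)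
      intro e he hxe
      have heB0 : e ∈ B0 := Finset.mem_coe.1 he
      have heD : e ∈ D := hB0D heB0
      have h1 := hall e heD hxe
      rw [hAeq] at h1
      exact (Finset.mem_sdiff.1 h1).2 heB0
    -- choose the two candidate vertices
    obtain ⟨e1, he1⟩ := hDne
    obtain ⟨⟨a0, b0⟩, he1eq⟩ := e1.exists_rep
    have hab : a0 ≠ b0 := by
      intro h
      exact hsimple e1 he1 (by rw [← he1eq, h]; exact Sym2.mk_isDiag_iff.2 rfl)
    have hTcases : ∃ u v : V, u ≠ v ∧ T ⊆ {u, v} := by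
      by_cases h2 : ∃ u ∈ T, ∃ v ∈ T, u ≠ v
      · obtain ⟨u, hu, v, hvv, huv⟩ := h2
        refine ⟨u, v, huv, ?_⟩
        have hsub : ({u, v} : Set V) ⊆ T := by
          rw [Set.insert_subset_iff, Set.singleton_subset_iff]
          exact ⟨hu, hvv⟩
        have h3 : ({u, v} : Set V) = T :=
          Set.eq_of_subset_of_ncard_le hsub
            (le_of_le_of_eq htech (Set.ncard_pair huv).symm) (Set.toFinite T)
        rw [← h3]
      · push_neg at h2
        rcases Set.eq_empty_or_nonempty T with h3 | ⟨t, ht⟩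
        · exact ⟨a0, b0, hab, by rw [h3]; exact Set.empty_subset _⟩
        · by_cases h4 : a0 = t
          · refine ⟨t, b0, fun h => hab (h4.trans h), ?_⟩
            intro y hy
            rw [h2 y hy t ht]
            exact Set.mem_insert t _
          · refine ⟨t, a0, fun h => h4 h.symm, ?_⟩
            intro y hy
            rw [h2 y hy t ht]
            exact Set.mem_insert t _
    obtain ⟨u, v, huv, hTuv⟩ := hTcases
    obtain ⟨B1, hB1⟩ := id hPne
    have hWspnB1 : W ≤ spn d p ↑B1 := Finset.inf_le hB1
    -- every element of W is a multiple of the row of s(u,v)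
    have hWle : W ≤ (ℝ ∙ rigRow d p s(u, v)) := by
      intro w hw
      have hvan : ∀ x : V, x ≠ u → x ≠ v → ∀ i, w (x, i) = 0 := by
        intro x hxu hxv i
        have hxT : x ∉ T := by
          intro hxT
          rcases hTuv hxT with h | h
          · exact hxu h
          · exact hxv h
        exact mem_vanishAt.1 (hmono x hxT hw) i
      have htr : ∀ i, transF d V i w = 0 := fun i =>
        LinearMap.mem_ker.1 (spn_le_ker_transF d p ↑B1 i (hWspnB1 hw))
      have hsk : ∀ i j, skewF d p i j w = 0 := fun i j =>
        LinearMap.mem_ker.1 (spn_le_ker_skewF d p ↑B1 i j (hWspnB1 hw))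
      obtain ⟨c, hc⟩ := vector_char hp hd huv w hvan htr hsk
      rw [Submodule.mem_span_singleton]
      exact ⟨c, hc.symm⟩
    obtain ⟨w0, hw0W, hw0ne⟩ := (Submodule.ne_bot_iff W).1 hWbot
    obtain ⟨c, hc⟩ := Submodule.mem_span_singleton.1 (hWle hw0W)
    have hcne : c ≠ 0 := by
      rintro rfl
      rw [zero_smul] at hc
      exact hw0ne hc.symm
    have hrowW : rigRow d p s(u, v) ∈ W := by
      have h5 : rigRow d p s(u, v) = c⁻¹ • w0 := by
        rw [← hc, smul_smul, inv_mul_cancel₀ hcne, one_smul]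
      rw [h5]
      exact Submodule.smul_mem W _ hw0W
    have hrowB : ∀ B ∈ P, rigRow d p s(u, v) ∈ spn d p ↑B := by
      intro B hB
      have hle : W ≤ spn d p ↑B := Finset.inf_le hB
      exact hle hrowW
    have hnd0 : ¬ (s(u, v) : Sym2 V).IsDiag := fun h => huv (Sym2.mk_isDiag_iff.1 h)
    have he0Z : s(u, v) ∈ ⋂ B ∈ P, rcl d p ↑B :=
      Set.mem_iInter₂.2 fun B hB => ⟨hnd0, rrk_insert_of_mem (hrowB B hB)⟩
    have hZeq : (⋂ B ∈ P, rcl d p ↑B) = {s(u, v)} := by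
      apply Set.Subset.antisymm
      · intro e' he'
        rw [Set.mem_iInter₂] at he'
        have hrow' : rigRow d p e' ∈ W := by
          rw [hWdef, mem_inf_submodule]
          exact fun B hB => mem_spn_of_rrk_insert (he' B hB).2
        obtain ⟨c', hc'⟩ := Submodule.mem_span_singleton.1 (hWle hrow')
        have hnd' := (he' B1 hB1).1
        obtain ⟨⟨x, y⟩, rfl⟩ := e'.exists_rep
        have hxy : x ≠ y := fun h => hnd' (Sym2.mk_isDiag_iff.2 h)
        have hc'ne : c' ≠ 0 := by
          rintro rfl
          rw [zero_smul] at hc'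
          exact rigRow_ne_zero hp hd hxy hc'.symm
        set i0 : Fin d := ⟨0, hd⟩ with hi0
        have hend : ∀ z : V, z ≠ u → z ≠ v → ∀ i, rigRow d p s(x, y) (z, i) = 0 := by
          intro z hzu hzv i
          rw [← hc', Pi.smul_apply, rigRow_apply_off d p i hzu hzv, smul_zero]
        have hx : x = u ∨ x = v := by
          by_contra hcon
          push_neg at hcon
          have h6 := hend x hcon.1 hcon.2 i0
          rw [rigRow_mk] at h6
          rw [if_pos rfl, if_neg hxy] at h6
          have h7 : p x i0 - p y i0 = 0 := by linarith
          exact generic_ne hp hxy i0 (sub_eq_zero.1 h7)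
        have hy : y = u ∨ y = v := by
          by_contra hcon
          push_neg at hcon
          have h6 := hend y hcon.1 hcon.2 i0
          rw [rigRow_mk] at h6
          have hyx : y ≠ x := fun h => hxy h.symm
          rw [if_neg hyx, if_pos rfl] at h6
          have h7 : p x i0 - p y i0 = 0 := by linarith
          exact generic_ne hp hxy i0 (sub_eq_zero.1 h7)
        rw [Set.mem_singleton_iff]
        rcases hx with rfl | rfl <;> rcases hy with rfl | rfl
        · exact absurd rfl hxy
        · rfl
        · exact Sym2.eq_swap
        · exact absurd rfl hxy
      · intro e' he'
        rw [Set.mem_singleton_iff] at he'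
        subst he'
        exact he0Z
    have hrkZ : rrk d p {s(u, v)} = 1 := rrk_singleton (rigRow_ne_zero hp hd huv)
    have hfrW : Module.finrank ℝ ↥W ≤ 1 := by
      calc Module.finrank ℝ ↥W ≤ Module.finrank ℝ ↥(ℝ ∙ rigRow d p s(u, v)) :=
        Submodule.finrank_mono hWle
      _ = 1 := finrank_span_singleton (rigRow_ne_zero hp hd huv)
    have hlk1 : (l : ℤ) ≤ (k : ℤ) + 1 := by
      have : (Module.finrank ℝ ↥W : ℤ) ≤ 1 := by exact_mod_cast hfrW
      linarith
    -- claim 4 : k + 1 ≤ l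
    have hinf4 : P.inf (fun B => B ∪ {s(u, v)}) = {s(u, v)} := by
      ext e
      rw [mem_inf_finsets]
      constructor
      · intro h
        by_contra hne
        rw [Finset.mem_singleton] at hne
        have h7 : e ∈ P.inf id := (mem_inf_finsets P id e).2 fun B hB => by
          rcases Finset.mem_union.1 (h B hB) with h1 | h1
          · exact h1
          · exact absurd (Finset.mem_singleton.1 h1) hne
        rw [hPinf] at h7
        exact Finset.notMem_empty e h7
      · intro h B hB
        exact Finset.mem_union_right _ (Finset.mem_singleton.2 (Finset.mem_singleton.1 h))
    have hnul1 : nulZ d p ({s(u, v)} : Finset (Sym2 V)) = 0 := by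
      unfold nulZ
      rw [Finset.card_singleton, Finset.coe_singleton, hrkZ]
      ring
    have hterm : ∀ B ∈ P, (k : ℤ) - 1 ≤ nulZ d p (B ∪ {s(u, v)}) := by
      intro B hB
      have h8 := nul_mono d p (Finset.subset_union_left (s₁ := B) (s₂ := {s(u, v)}))
      rw [hnulB B hB] at h8
      linarith
    have hnulU : ∀ B ∈ P, s(u, v) ∉ B → nulZ d p (B ∪ {s(u, v)}) = (k : ℤ) := by
      intro B hB hnB
      have hcard : (B ∪ {s(u, v)}).card = B.card + 1 := by
        rw [Finset.card_union_of_disjoint (Finset.disjoint_singleton_right.2 hnB),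
          Finset.card_singleton]
      have hrk : rrk d p ↑(B ∪ {s(u, v)}) = rrk d p ↑B := by
        have h9 : (↑(B ∪ {s(u, v)}) : Set (Sym2 V)) = insert s(u, v) ↑B := by
          rw [Finset.coe_union, Finset.coe_singleton]
          ext z
          simp [or_comm]
        rw [h9]
        exact rrk_insert_of_mem (hrowB B hB)
      have h10 := hnulB B hB
      unfold nulZ at h10 ⊢
      rw [hcard, hrk]
      push_cast
      push_cast at h10
      linarith
    have hk1l : (k : ℤ) + 1 ≤ l := by
      by_cases he0D : s(u, v) ∈ D
      · have hchain := nul_chain d p D (fun B => B ∪ {s(u, v)}) P hPne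
          (fun B hB => Finset.union_subset (hsubP B hB) (Finset.singleton_subset_iff.2 he0D))
        rw [hinf4, hnul1, hnulD] at hchain
        obtain ⟨Bm, hBm, hBme⟩ := hcover s(u, v) he0D
        have hsumlb : (l : ℤ) * ((k : ℤ) - 1) + 1 ≤ ∑ B ∈ P, nulZ d p (B ∪ {s(u, v)}) := by
          rw [← Finset.add_sum_erase P _ hBm]
          have h11 : ((P.erase Bm).card : ℤ) = (l : ℤ) - 1 := by
            rw [Finset.card_erase_of_mem hBm]
            have := Finset.card_pos.2 ⟨Bm, hBm⟩
            push_cast [← hl]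
            omega
          have h12 : ((P.erase Bm).card : ℤ) * ((k : ℤ) - 1)
              ≤ ∑ B ∈ P.erase Bm, nulZ d p (B ∪ {s(u, v)}) := by
            have h13 : ∑ _B ∈ P.erase Bm, ((k : ℤ) - 1)
                ≤ ∑ B ∈ P.erase Bm, nulZ d p (B ∪ {s(u, v)}) :=
              Finset.sum_le_sum (fun B hB => hterm B (Finset.mem_of_mem_erase hB))
            rw [Finset.sum_const, nsmul_eq_mul] at h13
            exact h13
          have h14 := hnulU Bm hBm hBme
          rw [h11] at h12
          have hid : ((l : ℤ) - 1) * ((k : ℤ) - 1) + k = (l : ℤ) * ((k : ℤ) - 1) + 1 := by ring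
          linarith
        have hid2 : ((l : ℤ) - 1) * (k : ℤ) = (l : ℤ) * ((k : ℤ) - 1) + ((l : ℤ) - k) := by ring
        linarith
      · -- s(u,v) ∉ D
        have hrowD : rigRow d p s(u, v) ∈ spn d p ↑D :=
          spn_mono d p (Finset.coe_subset.2 (hsubP B1 hB1)) (hrowB B1 hB1)
        have hnulDU : nulZ d p (D ∪ {s(u, v)}) = (k : ℤ) + 1 := by
          have hcard : (D ∪ {s(u, v)}).card = D.card + 1 := by
            rw [Finset.card_union_of_disjoint (Finset.disjoint_singleton_right.2 he0D),
          Finset.card_singleton]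
          have hrk : rrk d p ↑(D ∪ {s(u, v)}) = rrk d p ↑D := by
            have h9 : (↑(D ∪ {s(u, v)}) : Set (Sym2 V)) = insert s(u, v) ↑D := by
              rw [Finset.coe_union, Finset.coe_singleton]
              ext z
              simp [or_comm]
            rw [h9]
            exact rrk_insert_of_mem hrowD
          unfold nulZ at hnulD ⊢
          rw [hcard, hrk]
          push_cast
          push_cast at hnulD
          linarith
        have hchain := nul_chain d p (D ∪ {s(u, v)}) (fun B => B ∪ {s(u, v)}) P hPne
          (fun B hB => Finset.union_subset
            (le_trans (hsubP B hB) Finset.subset_union_left)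
            Finset.subset_union_right)
        rw [hinf4, hnul1, hnulDU] at hchain
        have hsum4 : ∑ B ∈ P, nulZ d p (B ∪ {s(u, v)}) = (l : ℤ) * k := by
          rw [Finset.sum_congr rfl (fun B hB =>
            hnulU B hB (fun hc => he0D (hsubP B hB hc))), Finset.sum_const, nsmul_eq_mul, ← hl]
        rw [hsum4, ← hl] at hchain
        have hid3 : (l : ℤ) * k - ((l : ℤ) - 1) * ((k : ℤ) + 1) = (k : ℤ) + 1 - l := by ring
        linarith
    -- conclude
    unfold IsBalanced
    rw [hZdef, hZeq, hncard]
    have : rrk d p {s(u, v)} = 1 := hrkZ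
    rw [this]
    omega
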